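/- Let Δ ∈ (0,1], c, c', X ≥ 1, C ≥ 0, and α ∈ (0,1). Then min over λ ∈ [0,1] of ((1/2)·c^{1-α}·X^α + (1/2)·c'·log X - λ·(X·Δ - C)) ≤ c·Δ^{-α/(1-α)} + 2·c^{1-α}·(C/Δ)^α + 2·c'·log(1 + (c' + C)/Δ). -/

import Mathlib

open Real

/-- Self-bounding optimization lemma. -/
theorem self_bounding_min (α Δ c c' X C : ℝ) (hα0 : 0 < α) (hα1 : α < 1)
    (hΔ0 : 0 < Δ) (hΔ1 : Δ ≤ 1) (hc : 1 ≤ c) (hc' : 1 ≤ c') (hX : 1 ≤ X) (hC : 0 ≤ C) :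
    ∃ lam : ℝ, lam ∈ Set.Icc (0:ℝ) 1 ∧
      (1/2) * c ^ (1 - α) * X ^ α + (1/2) * c' * Real.log X - lam * (X * Δ - C)
      ≤ c * Δ ^ (-(α / (1 - α))) + 2 * c ^ (1 - α) * (C / Δ) ^ α
        + 2 * c' * Real.log (1 + (c' + C) / Δ) := by
  set u := (c' + C) / Δ with hu
  have hc0 : (0:ℝ) ≤ c := by linarith
  have hc'0 : (0:ℝ) < c' := by linarith
  have hu0 : 0 ≤ u := div_nonneg (by linarith) hΔ0.le
  have hlogu : 0 ≤ Real.log (1 + u) := Real.log_nonneg (by linarith)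
  have hcpow : 0 ≤ c ^ (1 - α) := Real.rpow_nonneg hc0 _
  have hΔpow : 0 ≤ Δ ^ (-(α / (1 - α))) := Real.rpow_nonneg hΔ0.le _
  have hCpow : 0 ≤ (C / Δ) ^ α := Real.rpow_nonneg (div_nonneg hC hΔ0.le) _
  have hX0 : (0:ℝ) < X := lt_of_lt_of_le one_pos hX
  have hCu : C / Δ ≤ u := by
    rw [hu]
    gcongr
    linarith
  by_cases hcase : X ≤ 4 * C / Δ
  · refine ⟨0, ⟨le_refl 0, zero_le_one⟩, ?_⟩
    have h1 : X ^ α ≤ 4 * (C / Δ) ^ α := by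
      have hx4 : X ≤ 4 * (C / Δ) := by rw [mul_div_assoc] at hcase; exact hcase
      calc X ^ α ≤ (4 * (C / Δ)) ^ α :=
            Real.rpow_le_rpow hX0.le hx4 hα0.le
        _ = 4 ^ α * (C / Δ) ^ α :=
            Real.mul_rpow (by norm_num) (div_nonneg hC hΔ0.le)
        _ ≤ 4 * (C / Δ) ^ α := by
            gcongr
            calc (4:ℝ) ^ α ≤ 4 ^ (1:ℝ) :=
                  Real.rpow_le_rpow_of_exponent_le (by norm_num) hα1.le
              _ = 4 := Real.rpow_one 4
    have h2 : Real.log X ≤ 4 * Real.log (1 + u) := by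
      have hle : X ≤ (1 + u) ^ 4 := by
        have h4u : X ≤ 4 * u := by
          have : 4 * C / Δ = 4 * (C / Δ) := by ring
          rw [this] at hcase
          linarith
        nlinarith [sq_nonneg u, mul_nonneg (mul_nonneg hu0 hu0) hu0,
          mul_nonneg (mul_nonneg (mul_nonneg hu0 hu0) hu0) hu0]
      calc Real.log X ≤ Real.log ((1 + u) ^ 4) := Real.log_le_log hX0 hle
        _ = 4 * Real.log (1 + u) := by rw [Real.log_pow]; push_cast; ring
    nlinarith [mul_le_mul_of_nonneg_left h1 hcpow,
      mul_le_mul_of_nonneg_left h2 hc'0.le,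
      mul_nonneg hc0 hΔpow]
  · refine ⟨1, ⟨zero_le_one, le_refl 1⟩, ?_⟩
    push_neg at hcase
    have hC4 : 4 * C < X * Δ := by
      rw [div_lt_iff₀ hΔ0] at hcase; linarith
    have h1α : (1:ℝ) - α ≠ 0 := ne_of_gt (by linarith)
    -- weighted AM-GM
    have hAM : c ^ (1 - α) * X ^ α
        ≤ (1 - α) * (c * Δ ^ (-(α / (1 - α)))) + α * (X * Δ) := by
      have hβ : (Δ ^ (-(α / (1 - α)))) ^ (1 - α) = Δ ^ (-α) := by
        rw [← Real.rpow_mul hΔ0.le]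
        congr 1
        field_simp
      have hid : (c * Δ ^ (-(α / (1 - α)))) ^ (1 - α) * (X * Δ) ^ α
          = c ^ (1 - α) * X ^ α := by
        rw [Real.mul_rpow hc0 hΔpow, Real.mul_rpow hX0.le hΔ0.le, hβ,
          Real.rpow_neg hΔ0.le]
        have hΔα : Δ ^ α ≠ 0 := (Real.rpow_pos_of_pos hΔ0 α).ne'
        field_simp
      calc c ^ (1 - α) * X ^ α
          = (c * Δ ^ (-(α / (1 - α)))) ^ (1 - α) * (X * Δ) ^ α := hid.symm
        _ ≤ (1 - α) * (c * Δ ^ (-(α / (1 - α)))) + α * (X * Δ) :=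
            Real.geom_mean_le_arith_mean2_weighted (by linarith) hα0.le
              (mul_nonneg hc0 hΔpow) (mul_nonneg hX0.le hΔ0.le) (by ring)
    -- log bound
    have hlog : Real.log X ≤ X * Δ / (2 * c') + 2 * Real.log (1 + u) := by
      have hpos : (0:ℝ) < X * Δ / (2 * c') := by positivity
      have h1 : Real.log (X * Δ / (2 * c')) ≤ X * Δ / (2 * c') - 1 :=
        Real.log_le_sub_one_of_pos hpos
      have h2 : Real.log (X * Δ / (2 * c'))
          = Real.log X + Real.log Δ - Real.log (2 * c') := by
        rw [Real.log_div (by positivity) (by positivity),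
          Real.log_mul hX0.ne' hΔ0.ne']
      have h3 : Real.log (2 * c' / Δ) = Real.log (2 * c') - Real.log Δ :=
        Real.log_div (by positivity) hΔ0.ne'
      have h2c : Real.log (2 * c' / Δ) ≤ 2 * Real.log (1 + u) := by
        have hcu : c' / Δ ≤ u := by rw [hu]; gcongr; linarith
        have hle : 2 * c' / Δ ≤ (1 + u) ^ 2 := by
          have : 2 * c' / Δ = 2 * (c' / Δ) := by ring
          nlinarith [sq_nonneg u]
        calc Real.log (2 * c' / Δ) ≤ Real.log ((1 + u) ^ 2) :=
              Real.log_le_log (by positivity) hle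
          _ = 2 * Real.log (1 + u) := by rw [Real.log_pow]; push_cast; ring
      linarith
    have hlog2 : (1/2) * c' * Real.log X ≤ (1/4) * (X * Δ) + c' * Real.log (1 + u) := by
      have := mul_le_mul_of_nonneg_left hlog (by positivity : (0:ℝ) ≤ (1/2) * c')
      have heq : (1/2) * c' * (X * Δ / (2 * c') + 2 * Real.log (1 + u))
          = (1/4) * (X * Δ) + c' * Real.log (1 + u) := by
        field_simp
        ring
      linarith [heq ▸ this]
    nlinarith [mul_nonneg hc0 hΔpow, mul_nonneg hα0.le (mul_nonneg hc0 hΔpow),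
      mul_nonneg (mul_nonneg hcpow hCpow) (by norm_num : (0:ℝ) ≤ 2),
      mul_nonneg hc'0.le hlogu,
      mul_nonneg (by linarith : (0:ℝ) ≤ 1 - α) (mul_nonneg hX0.le hΔ0.le)]
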